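/- Every dually ms Stone semi-Heyting algebra is at level 2, i.e., satisfies the identity (x ∧ x′*)′* = (x ∧ x′*)′*′*. -/
import Mathlib


class SemiHeyting (α : Type*) extends Lattice α, BoundedOrder α where
  himp : α → α → α
  sh1 : ∀ x y : α, x ⊓ himp x y = x ⊓ y
  sh2 : ∀ x y z : α, x ⊓ himp y z = x ⊓ himp (x ⊓ y) (x ⊓ z)
  sh3 : ∀ x : α, himp x x = ⊤

namespace SemiHeyting

variable {α : Type*} [SemiHeyting α]

def star (x : α) : α := himp x ⊥

end SemiHeyting

class DQD (α : Type*) extends SemiHeyting α where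
  prime : α → α
  prime_bot : prime ⊥ = ⊤
  prime_top : prime ⊤ = ⊥
  prime_inf : ∀ x y : α, prime (x ⊓ y) = prime x ⊔ prime y
  prime_prime_sup : ∀ x y : α, prime (prime (x ⊔ y)) = prime (prime x) ⊔ prime (prime y)
  prime_prime_le : ∀ x : α, prime (prime x) ≤ x

class DmsSt (α : Type*) extends DQD α where
  stone : ∀ x : α, SemiHeyting.star x ⊔ SemiHeyting.star (SemiHeyting.star x) = ⊤
  jdm : ∀ x y : α, prime (x ⊔ y) = prime x ⊓ prime y

open SemiHeyting DQD

section Aux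

variable {α : Type*} [SemiHeyting α]

lemma sh_le_himp_iff {x y z : α} : z ⊓ x ≤ y ↔ z ≤ SemiHeyting.himp x (x ⊓ y) := by
  constructor
  · intro h
    have h2 : z ⊓ SemiHeyting.himp x (x ⊓ y)
        = z ⊓ SemiHeyting.himp (z ⊓ x) (z ⊓ (x ⊓ y)) := SemiHeyting.sh2 z x (x ⊓ y)
    have hzx : z ⊓ (x ⊓ y) = z ⊓ x := by
      apply le_antisymm
      · exact inf_le_inf_left z inf_le_left
      · exact le_inf inf_le_left (le_inf inf_le_right h)
    rw [hzx, SemiHeyting.sh3, inf_top_eq] at h2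
    exact inf_eq_left.mp h2
  · intro h
    calc z ⊓ x ≤ SemiHeyting.himp x (x ⊓ y) ⊓ x := inf_le_inf_right x h
      _ = x ⊓ SemiHeyting.himp x (x ⊓ y) := inf_comm _ _
      _ = x ⊓ (x ⊓ y) := SemiHeyting.sh1 x (x ⊓ y)
      _ ≤ y := le_trans inf_le_right inf_le_right

lemma sh_inf_sup (a b c : α) : a ⊓ (b ⊔ c) = (a ⊓ b) ⊔ (a ⊓ c) := by
  apply le_antisymm
  · set t := (a ⊓ b) ⊔ (a ⊓ c) with ht
    have hb : b ≤ SemiHeyting.himp a (a ⊓ t) := by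
      apply sh_le_himp_iff.mp
      exact le_trans (le_of_eq (inf_comm b a)) le_sup_left
    have hc : c ≤ SemiHeyting.himp a (a ⊓ t) := by
      apply sh_le_himp_iff.mp
      exact le_trans (le_of_eq (inf_comm c a)) le_sup_right
    calc a ⊓ (b ⊔ c) ≤ a ⊓ SemiHeyting.himp a (a ⊓ t) :=
          inf_le_inf_left a (sup_le hb hc)
      _ = a ⊓ (a ⊓ t) := SemiHeyting.sh1 a (a ⊓ t)
      _ ≤ t := le_trans inf_le_right inf_le_right
  · exact sup_le (inf_le_inf_left a le_sup_left) (inf_le_inf_left a le_sup_right)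

lemma sh_le_star_iff {x z : α} : z ≤ SemiHeyting.star x ↔ z ⊓ x = ⊥ := by
  unfold SemiHeyting.star
  rw [show SemiHeyting.himp x (⊥ : α) = SemiHeyting.himp x (x ⊓ ⊥) by rw [inf_bot_eq]]
  constructor
  · intro h
    exact le_antisymm (sh_le_himp_iff.mpr h) bot_le
  · intro h
    exact sh_le_himp_iff.mp (le_of_eq h)

lemma sh_inf_star (x : α) : x ⊓ SemiHeyting.star x = ⊥ := by
  unfold SemiHeyting.star
  rw [SemiHeyting.sh1, inf_bot_eq]

lemma sh_star_anti {x y : α} (h : x ≤ y) : SemiHeyting.star y ≤ SemiHeyting.star x := by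
  apply sh_le_star_iff.mpr
  apply le_antisymm _ bot_le
  calc SemiHeyting.star y ⊓ x ≤ SemiHeyting.star y ⊓ y := inf_le_inf_left _ h
    _ = y ⊓ SemiHeyting.star y := inf_comm _ _
    _ = ⊥ := sh_inf_star y

lemma sh_star_sup (a b : α) :
    SemiHeyting.star (a ⊔ b) = SemiHeyting.star a ⊓ SemiHeyting.star b := by
  apply le_antisymm
  · exact le_inf (sh_star_anti le_sup_left) (sh_star_anti le_sup_right)
  · apply sh_le_star_iff.mpr
    rw [sh_inf_sup]
    have h1 : SemiHeyting.star a ⊓ SemiHeyting.star b ⊓ a = ⊥ := by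
      apply le_antisymm _ bot_le
      calc SemiHeyting.star a ⊓ SemiHeyting.star b ⊓ a
          ≤ SemiHeyting.star a ⊓ a := inf_le_inf_right a inf_le_left
        _ = a ⊓ SemiHeyting.star a := inf_comm _ _
        _ = ⊥ := sh_inf_star a
    have h2 : SemiHeyting.star a ⊓ SemiHeyting.star b ⊓ b = ⊥ := by
      apply le_antisymm _ bot_le
      calc SemiHeyting.star a ⊓ SemiHeyting.star b ⊓ b
          ≤ SemiHeyting.star b ⊓ b := inf_le_inf_right b inf_le_right
        _ = b ⊓ SemiHeyting.star b := inf_comm _ _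
        _ = ⊥ := sh_inf_star b
    rw [h1, h2, sup_idem]

/-- In a semi-Heyting algebra (distributive), the pseudocomplement of a complemented
element is its complement. -/
lemma sh_star_of_compl {c d : α} (h1 : c ⊓ d = ⊥) (h2 : c ⊔ d = ⊤) :
    SemiHeyting.star c = d := by
  apply le_antisymm
  · calc SemiHeyting.star c = SemiHeyting.star c ⊓ (c ⊔ d) := by rw [h2, inf_top_eq]
      _ = (SemiHeyting.star c ⊓ c) ⊔ (SemiHeyting.star c ⊓ d) := sh_inf_sup _ _ _
      _ = ⊥ ⊔ (SemiHeyting.star c ⊓ d) := by rw [inf_comm (SemiHeyting.star c) c, sh_inf_star]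
      _ = SemiHeyting.star c ⊓ d := bot_sup_eq _
      _ ≤ d := inf_le_right
  · apply sh_le_star_iff.mpr
    rw [inf_comm, h1]

end Aux

lemma dqd_prime_anti {α : Type*} [DQD α] {x y : α} (h : x ≤ y) :
    DQD.prime y ≤ DQD.prime x := by
  have hxy : x ⊓ y = x := inf_eq_left.mpr h
  have := DQD.prime_inf x y
  rw [hxy] at this
  rw [this]
  exact le_sup_right

theorem stmt18 {α : Type*} [DmsSt α] (x : α) :
    SemiHeyting.star (DQD.prime (x ⊓ SemiHeyting.star (DQD.prime x)))
      = SemiHeyting.star (DQD.prime (SemiHeyting.star (DQD.prime (x ⊓ SemiHeyting.star (DQD.prime x))))) := by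
  set p := DQD.prime x with hp
  set A := SemiHeyting.star p with hA
  set B := SemiHeyting.star A with hB
  -- A and B are complements of each other
  have hABbot : A ⊓ B = ⊥ := sh_inf_star A
  have hABtop : A ⊔ B = ⊤ := DmsSt.stone p
  -- primes
  have hpbot : DQD.prime A ⊓ DQD.prime B = ⊥ := by
    rw [← DmsSt.jdm, hABtop, DQD.prime_top]
  have hptop : DQD.prime A ⊔ DQD.prime B = ⊤ := by
    rw [← DQD.prime_inf, hABbot, DQD.prime_bot]
  have hppbot : DQD.prime (DQD.prime B) ⊓ DQD.prime (DQD.prime A) = ⊥ := by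
    rw [← DmsSt.jdm, sup_comm, hptop, DQD.prime_top]
  have hpptop : DQD.prime (DQD.prime B) ⊔ DQD.prime (DQD.prime A) = ⊤ := by
    rw [← DQD.prime_inf, inf_comm, hpbot, DQD.prime_bot]
  -- star of primes via complements
  have hsA' : SemiHeyting.star (DQD.prime A) = DQD.prime B :=
    sh_star_of_compl hpbot hptop
  have hsB'' : SemiHeyting.star (DQD.prime (DQD.prime B)) = DQD.prime (DQD.prime A) :=
    sh_star_of_compl hppbot hpptop
  -- compute LHS
  have hLHS : SemiHeyting.star (DQD.prime (x ⊓ A)) = A ⊓ DQD.prime B := by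
    rw [DQD.prime_inf, ← hp, sh_star_sup, ← hA, hsA']
  -- compute RHS
  have hRHS : SemiHeyting.star (DQD.prime (A ⊓ DQD.prime B))
      = DQD.prime B ⊓ DQD.prime (DQD.prime A) := by
    rw [DQD.prime_inf, sh_star_sup, hsA', hsB'']
  rw [hLHS, hRHS]
  -- final identity : A ⊓ B′ = B′ ⊓ A″
  apply le_antisymm
  · have hdecomp : A ⊓ DQD.prime B
        = (A ⊓ DQD.prime B ⊓ DQD.prime (DQD.prime B))
          ⊔ (A ⊓ DQD.prime B ⊓ DQD.prime (DQD.prime A)) := by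
      conv_lhs => rw [← inf_top_eq (A ⊓ DQD.prime B), ← hpptop]
      rw [sh_inf_sup]
    have h2 : A ⊓ DQD.prime B ⊓ DQD.prime (DQD.prime B) = ⊥ := by
      apply le_antisymm _ bot_le
      calc A ⊓ DQD.prime B ⊓ DQD.prime (DQD.prime B)
          ≤ A ⊓ DQD.prime (DQD.prime B) :=
            le_inf (le_trans inf_le_left inf_le_left) inf_le_right
        _ ≤ A ⊓ B := inf_le_inf_left A (DQD.prime_prime_le B)
        _ = ⊥ := hABbot
    rw [hdecomp, h2, bot_sup_eq]
    exact le_inf (le_trans inf_le_left inf_le_right) inf_le_right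
  · exact le_inf (le_trans inf_le_right (DQD.prime_prime_le A)) inf_le_left
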